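/- arXiv:math/9904168 — 9 statements merged into one kernel-verified Lean document; each statement's English description precedes it below -/
import Mathlib

section
/- Let R be a commutative ring, M an R-module, and δ, Δ : M → M two R-linear maps satisfying δ ∘ δ = 0, Δ ∘ Δ = 0 and δ ∘ Δ + Δ ∘ δ = 0. Assume range(δ ∘ Δ) = range(δ) ⊓ ker(Δ) and range(δ ∘ Δ) = range(Δ) ⊓ ker(δ). Then: (a) for every z ∈ ker(δ) there exist h ∈ ker(δ) ⊓ ker(Δ) and v ∈ M with z = h + δ v; (b) every element of ker(δ) ⊓ ker(Δ) ⊓ range(δ) lies in the image δ(ker Δ) of ker(Δ) under δ; and the analogous statements (a'), (b') hold with the roles of δ and Δ interchanged. (Equivalently, the inclusions (ker Δ, δ) ↪ (M, δ) and (ker δ, Δ) ↪ (M, Δ) induce isomorphisms on homology.) -/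
/-- Lemma 1 of Cao–Zhou, direction (ii) ⟹ (i): if
`range (δ ∘ Δ) = range δ ⊓ ker Δ` and `range (δ ∘ Δ) = range Δ ⊓ ker δ`, then
the inclusions `(ker Δ, δ) ↪ (M, δ)` and `(ker δ, Δ) ↪ (M, Δ)` induce
isomorphisms on homology, expressed via (a) surjectivity and (b) injectivity
of the induced maps, together with the analogous statements (a'), (b') with
the roles of `δ` and `Δ` interchanged. -/
theorem stmt1 {R : Type*} [CommRing R] {M : Type*} [AddCommGroup M] [Module R M]
    (δ Δ : M →ₗ[R] M)
    (hδ : δ ∘ₗ δ = 0) (hΔ : Δ ∘ₗ Δ = 0) (hanti : δ ∘ₗ Δ + Δ ∘ₗ δ = 0)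
    (h1 : LinearMap.range (δ ∘ₗ Δ) = LinearMap.range δ ⊓ LinearMap.ker Δ)
    (h2 : LinearMap.range (δ ∘ₗ Δ) = LinearMap.range Δ ⊓ LinearMap.ker δ) :
    (∀ z ∈ LinearMap.ker δ,
        ∃ h ∈ LinearMap.ker δ ⊓ LinearMap.ker Δ, ∃ v : M, z = h + δ v) ∧
    (∀ y ∈ LinearMap.ker δ ⊓ LinearMap.ker Δ ⊓ LinearMap.range δ,
        ∃ w ∈ LinearMap.ker Δ, y = δ w) ∧
    (∀ z ∈ LinearMap.ker Δ,
        ∃ h ∈ LinearMap.ker δ ⊓ LinearMap.ker Δ, ∃ v : M, z = h + Δ v) ∧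
    (∀ y ∈ LinearMap.ker δ ⊓ LinearMap.ker Δ ⊓ LinearMap.range Δ,
        ∃ w ∈ LinearMap.ker δ, y = Δ w) := by
  have hδδ : ∀ x : M, δ (δ x) = 0 := fun x => congrFun (congrArg DFunLike.coe hδ) x
  have hΔΔ : ∀ x : M, Δ (Δ x) = 0 := fun x => congrFun (congrArg DFunLike.coe hΔ) x
  have ha : ∀ x : M, δ (Δ x) + Δ (δ x) = 0 := fun x =>
    congrFun (congrArg DFunLike.coe hanti) x
  refine ⟨?_, ?_, ?_, ?_⟩
  · intro z hz
    simp only [SetLike.mem_coe, LinearMap.mem_ker] at hz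
    have hΔz : Δ z ∈ LinearMap.range (δ ∘ₗ Δ) := by
      rw [h2]
      refine ⟨⟨z, rfl⟩, ?_⟩
      simp only [SetLike.mem_coe, LinearMap.mem_ker]
      have := ha z
      rw [hz, map_zero, add_zero] at this
      exact this
    obtain ⟨u, hu⟩ := hΔz
    refine ⟨z + δ u, ⟨?_, ?_⟩, -u, by simp [map_neg, add_assoc]⟩
    · simp [SetLike.mem_coe, LinearMap.mem_ker, hz, hδδ]
    · simp only [SetLike.mem_coe, LinearMap.mem_ker, map_add]
      have : Δ (δ u) = -δ (Δ u) := by rw [eq_neg_iff_add_eq_zero, add_comm]; exact ha u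
      rw [this, ← hu]
      simp
  · intro y hy
    obtain ⟨⟨hy1, hy2⟩, hy3⟩ := hy
    have : y ∈ LinearMap.range (δ ∘ₗ Δ) := by rw [h1]; exact ⟨hy3, hy2⟩
    obtain ⟨w, hw⟩ := this
    exact ⟨Δ w, by simp [SetLike.mem_coe, LinearMap.mem_ker, hΔΔ], hw.symm⟩
  · intro z hz
    simp only [SetLike.mem_coe, LinearMap.mem_ker] at hz
    have hδz : δ z ∈ LinearMap.range (δ ∘ₗ Δ) := by
      rw [h1]
      refine ⟨⟨z, rfl⟩, ?_⟩
      simp only [SetLike.mem_coe, LinearMap.mem_ker]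
      have := ha z
      rw [hz, map_zero, zero_add] at this
      exact this
    obtain ⟨u, hu⟩ := hδz
    refine ⟨z - Δ u, ⟨?_, ?_⟩, u, by abel⟩
    · simp only [SetLike.mem_coe, LinearMap.mem_ker, map_sub]
      rw [show δ (Δ u) = δ z from hu]
      simp
    · simp [SetLike.mem_coe, LinearMap.mem_ker, hz, hΔΔ]
  · intro y hy
    obtain ⟨⟨hy1, hy2⟩, hy3⟩ := hy
    have : y ∈ LinearMap.range (δ ∘ₗ Δ) := by rw [h2]; exact ⟨hy3, hy1⟩
    obtain ⟨u, hu⟩ := this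
    have h3 := ha u
    refine ⟨-δ u, ?_, ?_⟩
    · simp [SetLike.mem_coe, LinearMap.mem_ker, hδδ]
    · rw [map_neg]
      have : Δ (δ u) = -δ (Δ u) := by rw [eq_neg_iff_add_eq_zero, add_comm]; exact ha u
      rw [this, neg_neg, ← hu]
      simp
end

section
/- Let R be a commutative ring, M an R-module, and δ, Δ : M → M two R-linear maps satisfying δ ∘ δ = 0, Δ ∘ Δ = 0 and δ ∘ Δ + Δ ∘ δ = 0. Assume: (a) for every z ∈ ker(δ) there exist h ∈ ker(δ) ⊓ ker(Δ) and v ∈ M with z = h + δ v; (b) every element of ker(δ) ⊓ ker(Δ) ⊓ range(δ) lies in δ(ker Δ); and the analogous statements (a'), (b') with the roles of δ and Δ interchanged. Then range(δ ∘ Δ) = range(δ) ⊓ ker(Δ) and range(δ ∘ Δ) = range(Δ) ⊓ ker(δ). -/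
/-- Lemma 1 of Cao–Zhou, direction (i) ⟹ (ii): if the inclusions
`(ker Δ, δ) ↪ (M, δ)` and `(ker δ, Δ) ↪ (M, Δ)` induce isomorphisms on
homology (expressed via conditions (a), (b), (a'), (b')), then
`range (δ ∘ Δ) = range δ ⊓ ker Δ` and `range (δ ∘ Δ) = range Δ ⊓ ker δ`. -/
theorem stmt2 {R : Type*} [CommRing R] {M : Type*} [AddCommGroup M] [Module R M]
    (δ Δ : M →ₗ[R] M)
    (hδ : δ ∘ₗ δ = 0) (hΔ : Δ ∘ₗ Δ = 0) (hanti : δ ∘ₗ Δ + Δ ∘ₗ δ = 0)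
    (ha : ∀ z ∈ LinearMap.ker δ,
        ∃ h ∈ LinearMap.ker δ ⊓ LinearMap.ker Δ, ∃ v : M, z = h + δ v)
    (hb : ∀ y ∈ LinearMap.ker δ ⊓ LinearMap.ker Δ ⊓ LinearMap.range δ,
        ∃ w ∈ LinearMap.ker Δ, y = δ w)
    (ha' : ∀ z ∈ LinearMap.ker Δ,
        ∃ h ∈ LinearMap.ker δ ⊓ LinearMap.ker Δ, ∃ v : M, z = h + Δ v)
    (hb' : ∀ y ∈ LinearMap.ker δ ⊓ LinearMap.ker Δ ⊓ LinearMap.range Δ,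
        ∃ w ∈ LinearMap.ker δ, y = Δ w) :
    LinearMap.range (δ ∘ₗ Δ) = LinearMap.range δ ⊓ LinearMap.ker Δ ∧
    LinearMap.range (δ ∘ₗ Δ) = LinearMap.range Δ ⊓ LinearMap.ker δ := by
  have hδ2 : ∀ x : M, δ (δ x) = 0 := fun x => congrFun (congrArg DFunLike.coe hδ) x
  have hΔ2 : ∀ x : M, Δ (Δ x) = 0 := fun x => congrFun (congrArg DFunLike.coe hΔ) x
  have hac : ∀ x : M, δ (Δ x) + Δ (δ x) = 0 :=
    fun x => congrFun (congrArg DFunLike.coe hanti) x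
  constructor
  · apply le_antisymm
    · rintro y ⟨x, rfl⟩
      refine ⟨⟨Δ x, rfl⟩, ?_⟩
      have := hac (Δ x)
      rw [hΔ2 x, map_zero, zero_add] at this
      simpa [LinearMap.mem_ker] using this
    · rintro y ⟨⟨x, rfl⟩, hy⟩
      obtain ⟨w, hw, hwy⟩ := hb (δ x) ⟨⟨by simp [hδ2], hy⟩, ⟨x, rfl⟩⟩
      obtain ⟨h, ⟨hh1, _⟩, v, hv⟩ := ha' w hw
      refine ⟨v, ?_⟩
      rw [LinearMap.comp_apply]
      rw [hwy, hv, map_add, hh1, zero_add]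
  · apply le_antisymm
    · rintro y ⟨x, rfl⟩
      simp only [LinearMap.comp_apply]
      exact ⟨⟨-δ x, by rw [map_neg, eq_neg_of_add_eq_zero_left (hac x)]⟩,
        by simpa [LinearMap.mem_ker] using hδ2 (Δ x)⟩
    · rintro y ⟨⟨x, rfl⟩, hy⟩
      obtain ⟨w, hw, hwy⟩ := hb' (Δ x) ⟨⟨hy, by simp [hΔ2]⟩, ⟨x, rfl⟩⟩
      obtain ⟨h, ⟨_, hh2⟩, v, hv⟩ := ha w hw
      refine ⟨-v, ?_⟩
      rw [LinearMap.comp_apply, hwy, hv, map_add, hh2, zero_add, map_neg, map_neg,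
        eq_neg_of_add_eq_zero_right (hac v)]
end

section
/- Let R be a commutative ring, M an R-module, and δ, Δ : M → M two R-linear maps satisfying δ ∘ δ = 0, Δ ∘ Δ = 0 and δ ∘ Δ + Δ ∘ δ = 0. Assume range(δ ∘ Δ) = range(δ) ⊓ ker(Δ) and range(δ ∘ Δ) = range(Δ) ⊓ ker(δ). Then the R-linear map from the submodule ker(δ) ⊓ ker(Δ) to the quotient module ker(δ) ⧸ range(δ), given by inclusion followed by the quotient projection, is surjective and its kernel is exactly range(δ ∘ Δ). In particular it induces an isomorphism (ker(δ) ⊓ ker(Δ)) ⧸ range(δ ∘ Δ) ≅ ker(δ) ⧸ range(δ). -/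
/-- Lemma 1 of Cao–Zhou (last part, δ-cohomology version): under condition (ii),
the map `ker δ ⊓ ker Δ → ker δ ⧸ range δ` (inclusion followed by the quotient
projection) is surjective with kernel exactly `range (δ ∘ Δ)`; hence
`(ker δ ⊓ ker Δ) ⧸ range (δ ∘ Δ) ≅ ker δ ⧸ range δ`. -/
theorem stmt3 {R : Type*} [CommRing R] {M : Type*} [AddCommGroup M] [Module R M]
    (δ Δ : M →ₗ[R] M)
    (hδ : δ ∘ₗ δ = 0) (hΔ : Δ ∘ₗ Δ = 0) (hanti : δ ∘ₗ Δ + Δ ∘ₗ δ = 0)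
    (h1 : LinearMap.range (δ ∘ₗ Δ) = LinearMap.range δ ⊓ LinearMap.ker Δ)
    (h2 : LinearMap.range (δ ∘ₗ Δ) = LinearMap.range Δ ⊓ LinearMap.ker δ) :
    Function.Surjective
      ((Submodule.comap (LinearMap.ker δ).subtype (LinearMap.range δ)).mkQ ∘ₗ
        Submodule.inclusion
          (inf_le_left : LinearMap.ker δ ⊓ LinearMap.ker Δ ≤ LinearMap.ker δ)) ∧
    LinearMap.ker
      ((Submodule.comap (LinearMap.ker δ).subtype (LinearMap.range δ)).mkQ ∘ₗ
        Submodule.inclusion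
          (inf_le_left : LinearMap.ker δ ⊓ LinearMap.ker Δ ≤ LinearMap.ker δ)) =
      Submodule.comap (LinearMap.ker δ ⊓ LinearMap.ker Δ).subtype
        (LinearMap.range (δ ∘ₗ Δ)) := by
  have hanti' : ∀ m : M, δ (Δ m) + Δ (δ m) = 0 := fun m =>
    congrFun (congrArg DFunLike.coe hanti) m
  have hδ' : ∀ m : M, δ (δ m) = 0 := fun m => congrFun (congrArg DFunLike.coe hδ) m
  have hΔ' : ∀ m : M, Δ (Δ m) = 0 := fun m => congrFun (congrArg DFunLike.coe hΔ) m
  constructor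
  · intro q
    obtain ⟨⟨x, hx⟩, rfl⟩ := Submodule.Quotient.mk_surjective _ q
    have hxker : δ x = 0 := hx
    have hΔx : Δ x ∈ LinearMap.range (δ ∘ₗ Δ) := by
      rw [h2]
      refine ⟨⟨x, rfl⟩, ?_⟩
      have h := hanti' x
      rw [hxker, map_zero, add_zero] at h
      exact h
    obtain ⟨m, hm⟩ := hΔx
    have hm' : δ (Δ m) = Δ x := hm
    have hy1 : δ (x + δ m) = 0 := by simp [hxker, hδ' m]
    have hy2 : Δ (x + δ m) = 0 := by
      have h3 : Δ (δ m) = - δ (Δ m) := eq_neg_of_add_eq_zero_right (hanti' m)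
      simp [map_add, h3, hm']
    refine ⟨⟨x + δ m, hy1, hy2⟩, ?_⟩
    simp only [LinearMap.comp_apply, Submodule.mkQ_apply]
    rw [Submodule.Quotient.eq]
    rw [Submodule.mem_comap]
    refine ⟨m, ?_⟩
    simp [Submodule.inclusion, Submodule.subtype_apply]
  · ext ⟨x, hx1, hx2⟩
    simp only [LinearMap.mem_ker, LinearMap.comp_apply, Submodule.mkQ_apply,
      Submodule.Quotient.mk_eq_zero, Submodule.mem_comap, Submodule.coe_subtype]
    constructor
    · intro h
      have hx' : x ∈ LinearMap.range δ := h
      rw [h1]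
      exact ⟨hx', hx2⟩
    · intro h
      rw [h1] at h
      exact h.1
end

section
/- Let R be a commutative ring, M an R-module, and δ, Δ : M → M two R-linear maps satisfying δ ∘ δ = 0, Δ ∘ Δ = 0 and δ ∘ Δ + Δ ∘ δ = 0. Assume range(δ ∘ Δ) = range(δ) ⊓ ker(Δ) and range(δ ∘ Δ) = range(Δ) ⊓ ker(δ). Then the R-linear map from the submodule ker(δ) ⊓ ker(Δ) to the quotient module ker(Δ) ⧸ range(Δ), given by inclusion followed by the quotient projection, is surjective and its kernel is exactly range(δ ∘ Δ). In particular it induces an isomorphism (ker(δ) ⊓ ker(Δ)) ⧸ range(δ ∘ Δ) ≅ ker(Δ) ⧸ range(Δ). -/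
/-- Lemma 1 of Cao–Zhou (last part, Δ-cohomology version): under condition (ii),
the map `ker δ ⊓ ker Δ → ker Δ ⧸ range Δ` (inclusion followed by the quotient
projection) is surjective with kernel exactly `range (δ ∘ Δ)`; hence
`(ker δ ⊓ ker Δ) ⧸ range (δ ∘ Δ) ≅ ker Δ ⧸ range Δ`. -/
theorem stmt4 {R : Type*} [CommRing R] {M : Type*} [AddCommGroup M] [Module R M]
    (δ Δ : M →ₗ[R] M)
    (hδ : δ ∘ₗ δ = 0) (hΔ : Δ ∘ₗ Δ = 0) (hanti : δ ∘ₗ Δ + Δ ∘ₗ δ = 0)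
    (h1 : LinearMap.range (δ ∘ₗ Δ) = LinearMap.range δ ⊓ LinearMap.ker Δ)
    (h2 : LinearMap.range (δ ∘ₗ Δ) = LinearMap.range Δ ⊓ LinearMap.ker δ) :
    Function.Surjective
      ((Submodule.comap (LinearMap.ker Δ).subtype (LinearMap.range Δ)).mkQ ∘ₗ
        Submodule.inclusion
          (inf_le_right : LinearMap.ker δ ⊓ LinearMap.ker Δ ≤ LinearMap.ker Δ)) ∧
    LinearMap.ker
      ((Submodule.comap (LinearMap.ker Δ).subtype (LinearMap.range Δ)).mkQ ∘ₗ
        Submodule.inclusion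
          (inf_le_right : LinearMap.ker δ ⊓ LinearMap.ker Δ ≤ LinearMap.ker Δ)) =
      Submodule.comap (LinearMap.ker δ ⊓ LinearMap.ker Δ).subtype
        (LinearMap.range (δ ∘ₗ Δ)) := by
  have hΔΔ : ∀ m, Δ (Δ m) = 0 := fun m => congrFun (congrArg DFunLike.coe hΔ) m
  have hδδ : ∀ m, δ (δ m) = 0 := fun m => congrFun (congrArg DFunLike.coe hδ) m
  have hac : ∀ m, δ (Δ m) + Δ (δ m) = 0 :=
    fun m => congrFun (congrArg DFunLike.coe hanti) m
  constructor
  · rintro ⟨⟨x, hx⟩⟩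
    have hxΔ : Δ x = 0 := hx
    have hδx : δ x ∈ LinearMap.range (δ ∘ₗ Δ) := by
      rw [h1]
      refine ⟨⟨x, rfl⟩, ?_⟩
      have := hac x
      simp only [hxΔ, map_zero, zero_add] at this
      exact this
    obtain ⟨m, hm⟩ := hδx
    refine ⟨⟨x - Δ m, ?_, ?_⟩, ?_⟩
    · show δ (x - Δ m) = 0
      simp only [map_sub]
      rw [show (δ ∘ₗ Δ) m = δ (Δ m) from rfl] at hm
      rw [hm, sub_self]
    · show Δ (x - Δ m) = 0
      simp [hxΔ, hΔΔ m]
    · simp only [LinearMap.comp_apply, Submodule.mkQ_apply]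
      exact (Submodule.Quotient.eq _).mpr ⟨-m, by simp [Submodule.inclusion]⟩
  · ext ⟨x, hx1, hx2⟩
    simp only [LinearMap.mem_ker, LinearMap.comp_apply, Submodule.mkQ_apply,
      Submodule.Quotient.mk_eq_zero, Submodule.mem_comap, Submodule.subtype_apply]
    constructor
    · intro h
      rw [h2]
      exact ⟨h, hx1⟩
    · rintro ⟨m, hm⟩
      have hm' : δ (Δ m) = x := hm
      refine ⟨-δ m, ?_⟩
      have := hac m
      show Δ (-δ m) = x
      rw [map_neg, ← hm', eq_comm, ← sub_eq_zero, sub_neg_eq_add, this]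
end

section
/- Let R be a commutative ring, M an R-module, and δ, Δ : M → M two R-linear maps satisfying δ ∘ δ = 0, Δ ∘ Δ = 0 and δ ∘ Δ + Δ ∘ δ = 0, and assume range(δ ∘ Δ) = range(δ) ⊓ ker(Δ) and range(δ ∘ Δ) = range(Δ) ⊓ ker(δ). If z ∈ M satisfies δ(Δ z) = 0, then there exist h ∈ ker(δ) ⊓ ker(Δ) and u, v ∈ M such that z = h + Δ u + δ v. -/
/-- Lemma 2 of Cao–Zhou: under condition (ii) of Lemma 1, if `δ (Δ z) = 0`
then `z = h + Δ u + δ v` with `h ∈ ker δ ⊓ ker Δ` and `u, v ∈ M`. -/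
theorem stmt5 {R : Type*} [CommRing R] {M : Type*} [AddCommGroup M] [Module R M]
    (δ Δ : M →ₗ[R] M)
    (hδ : δ ∘ₗ δ = 0) (hΔ : Δ ∘ₗ Δ = 0) (hanti : δ ∘ₗ Δ + Δ ∘ₗ δ = 0)
    (h1 : LinearMap.range (δ ∘ₗ Δ) = LinearMap.range δ ⊓ LinearMap.ker Δ)
    (h2 : LinearMap.range (δ ∘ₗ Δ) = LinearMap.range Δ ⊓ LinearMap.ker δ)
    (z : M) (hz : δ (Δ z) = 0) :
    ∃ h ∈ LinearMap.ker δ ⊓ LinearMap.ker Δ, ∃ u v : M, z = h + Δ u + δ v := by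
  have anti : ∀ x, δ (Δ x) + Δ (δ x) = 0 := fun x => congrArg (· x) hanti
  have hδδ : ∀ x, δ (δ x) = 0 := fun x => congrArg (· x) hδ
  have hΔΔ : ∀ x, Δ (Δ x) = 0 := fun x => congrArg (· x) hΔ
  -- Δ z ∈ range Δ ⊓ ker δ = range (δ ∘ Δ)
  have hmem : Δ z ∈ LinearMap.range (δ ∘ₗ Δ) := by
    rw [h2]
    exact ⟨⟨z, rfl⟩, hz⟩
  obtain ⟨w, hw⟩ := hmem
  simp only [LinearMap.comp_apply] at hw
  -- z' = z + δ w ∈ ker Δ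
  set z' := z + δ w with hz'
  have hΔz' : Δ z' = 0 := by
    have h := anti w
    rw [hw] at h
    simpa [hz'] using h
  -- δ z' ∈ range δ ⊓ ker Δ = range (δ ∘ Δ)
  have hmem2 : δ z' ∈ LinearMap.range (δ ∘ₗ Δ) := by
    rw [h1]
    refine ⟨⟨z', rfl⟩, ?_⟩
    show Δ (δ z') = 0
    have := anti z'
    rw [hΔz', map_zero, zero_add] at this
    exact this
  obtain ⟨t, ht⟩ := hmem2
  simp only [LinearMap.comp_apply] at ht
  refine ⟨z' - Δ t, ⟨?_, ?_⟩, t, -w, ?_⟩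
  · show δ (z' - Δ t) = 0
    simp [ht]
  · show Δ (z' - Δ t) = 0
    simp [hΔz', hΔΔ]
  · simp only [hz', map_neg]
    abel
end

section
/- Let R be a commutative ring and L a Lie algebra over R. For A, B ∈ L, with ad_X denoting the adjoint endomorphism [X, ·] of L, the following identity of linear endomorphisms of L holds for every natural number n ≥ 1: ad_B ∘ (ad_A)^n = Σ_{j=0}^{n} (n choose j) · (ad_A)^j ∘ ad_{((-ad_A)^{n-j})(B)}. -/
open LieAlgebra

private lemma stmt6_aux {R : Type*} [CommRing R] {L : Type*} [LieRing L] [LieAlgebra R L]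
    (A B : L) (k : ℕ) :
    ((LinearMap.mulRight R (LieAlgebra.ad R L A) -
        LinearMap.mulLeft R (LieAlgebra.ad R L A)) ^ k) (LieAlgebra.ad R L B) =
      LieAlgebra.ad R L (((-(LieAlgebra.ad R L A)) ^ k) B) := by
  induction k with
  | zero => simp
  | succ k ih =>
    rw [pow_succ', Module.End.mul_apply, ih, LinearMap.sub_apply,
      LinearMap.mulRight_apply, LinearMap.mulLeft_apply]
    set C := ((-(LieAlgebra.ad R L A)) ^ k) B with hC
    letI := LieRing.ofAssociativeRing (A := Module.End R L)
    have h := (LieAlgebra.ad R L).map_lie A C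
    rw [Ring.lie_def] at h
    have : ((-(LieAlgebra.ad R L A)) ^ (k + 1)) B =
        -(⁅A, C⁆ : L) := by
      rw [pow_succ']
      simp [hC, LieAlgebra.ad_apply]
    rw [this, map_neg, h]
    abel

/-- Lemma 3.1 (first part) of Cao–Zhou, ungraded form: for elements `A, B` of a
Lie algebra `L` over a commutative ring `R` and `n ≥ 1`,
`ad_B ∘ (ad_A)ⁿ = Σ_{j=0}^{n} (n choose j) • (ad_A)ʲ ∘ ad_{((-ad_A)^{n-j}) B}`. -/
theorem stmt6 {R : Type*} [CommRing R] {L : Type*} [LieRing L] [LieAlgebra R L]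
    (A B : L) (n : ℕ) (hn : 1 ≤ n) :
    (LieAlgebra.ad R L B) * (LieAlgebra.ad R L A) ^ n =
      ∑ j ∈ Finset.range (n + 1),
        (n.choose j) •
          ((LieAlgebra.ad R L A) ^ j *
            LieAlgebra.ad R L (((-(LieAlgebra.ad R L A)) ^ (n - j)) B)) := by
  clear hn
  set D := LieAlgebra.ad R L A with hD
  set N := LinearMap.mulRight R D - LinearMap.mulLeft R D with hN
  have hc : Commute (LinearMap.mulLeft R D) N := by
    exact ((LinearMap.commute_mulLeft_right D D).sub_right (Commute.refl _))
  have hsum : LinearMap.mulRight R D = LinearMap.mulLeft R D + N := by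
    rw [hN]; abel
  have hpow := hc.add_pow n
  rw [← hsum] at hpow
  have h1 : ((LinearMap.mulRight R D) ^ n) (LieAlgebra.ad R L B) =
      LieAlgebra.ad R L B * D ^ n := by
    rw [LinearMap.pow_mulRight, LinearMap.mulRight_apply]
  rw [← h1, hpow]
  rw [LinearMap.sum_apply]
  refine Finset.sum_congr rfl fun j hj => ?_
  rw [Module.End.mul_apply, Module.End.mul_apply, Module.End.natCast_apply,
    map_nsmul, map_nsmul, stmt6_aux, LinearMap.pow_mulLeft, LinearMap.mulLeft_apply]
end

section
/- Let R be a commutative ring, L a Lie algebra over R, and d : L → L an R-linear Lie derivation, i.e. d[x, y] = [d x, y] + [x, d y] for all x, y ∈ L. Then for every A ∈ L and every natural number n ≥ 1, the following identity of linear endomorphisms of L holds: d ∘ (ad_A)^n = (ad_A)^n ∘ d + Σ_{q=0}^{n-1} (n choose (n−1−q)) · (ad_A)^{n−1−q} ∘ ad_{((-ad_A)^{q})(d A)}. -/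
section Aux

variable {R : Type*} [CommRing R] {L : Type*} [LieRing L] [LieAlgebra R L]

/-- `ad x * ad A = ad A * ad x + ad (-(ad A) x)` -/
lemma aux_adT (A x : L) :
    LieAlgebra.ad R L x * LieAlgebra.ad R L A =
      LieAlgebra.ad R L A * LieAlgebra.ad R L x +
        LieAlgebra.ad R L ((-(LieAlgebra.ad R L A)) x) := by
  ext y
  simp only [Module.End.mul_apply, LinearMap.add_apply, LieAlgebra.ad_apply,
    LinearMap.neg_apply]
  rw [leibniz_lie A x y, neg_lie]
  abel

lemma aux_key (d : L →ₗ[R] L) (hd : ∀ x y : L, d ⁅x, y⁆ = ⁅d x, y⁆ + ⁅x, d y⁆)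
    (A : L) (n : ℕ) :
    d * (LieAlgebra.ad R L A) ^ (n + 1) =
      (LieAlgebra.ad R L A) ^ (n + 1) * d +
        ∑ q ∈ Finset.range (n + 1),
          ((n + 1).choose (q + 1)) •
            ((LieAlgebra.ad R L A) ^ (n - q) *
              LieAlgebra.ad R L (((-(LieAlgebra.ad R L A)) ^ q) (d A))) := by
  set T := LieAlgebra.ad R L A with hT
  set c : ℕ → Module.End R L := fun q => LieAlgebra.ad R L (((-T) ^ q) (d A)) with hc
  have hdT : d * T = T * d + c 0 := by
    ext y
    simp only [Module.End.mul_apply, LinearMap.add_apply, hc, pow_zero,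
      Module.End.one_apply, LieAlgebra.ad_apply, hT]
    rw [hd A y]
    abel
  have hcT : ∀ q, c q * T = T * c q + c (q + 1) := by
    intro q
    have := aux_adT (R := R) A (((-T) ^ q) (d A))
    rw [hc]
    simp only [← hT] at this ⊢
    rw [this, pow_succ' (-T) q]
    rfl
  induction n with
  | zero =>
    simpa [hc] using hdT
  | succ n ih =>
    have step : d * T ^ (n + 2) = (d * T ^ (n + 1)) * T := by
      rw [pow_succ, ← mul_assoc]
    rw [step, ih, add_mul, mul_assoc, hdT, Finset.sum_mul]
    have h1 : T ^ (n + 1) * (T * d + c 0) = T ^ (n + 2) * d + T ^ (n + 1) * c 0 := by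
      rw [mul_add, ← mul_assoc, ← pow_succ]
    rw [h1]
    have h2 : ∀ q ∈ Finset.range (n + 1),
        ((n + 1).choose (q + 1)) • (T ^ (n - q) * c q) * T =
          ((n + 1).choose (q + 1)) • (T ^ (n + 1 - q) * c q) +
            ((n + 1).choose (q + 1)) • (T ^ (n - q) * c (q + 1)) := by
      intro q hq
      rw [Finset.mem_range] at hq
      have hq' : q ≤ n := Nat.lt_succ_iff.mp hq
      rw [smul_mul_assoc, mul_assoc, hcT q, mul_add, ← mul_assoc, ← pow_succ]
      have e : n - q + 1 = n + 1 - q := by omega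
      rw [e, smul_add]
    rw [Finset.sum_congr rfl h2, Finset.sum_add_distrib]
    -- second sum: reindex
    have h3 : ∑ q ∈ Finset.range (n + 1),
        ((n + 1).choose (q + 1)) • (T ^ (n - q) * c (q + 1)) =
        (∑ q ∈ Finset.range (n + 2),
          ((n + 1).choose q) • (T ^ (n + 1 - q) * c q)) - T ^ (n + 1) * c 0 := by
      rw [Finset.sum_range_succ' (fun q => ((n + 1).choose q) • (T ^ (n + 1 - q) * c q)) (n + 1)]
      simp only [Nat.choose_zero_right, one_smul, Nat.sub_zero]
      rw [add_sub_cancel_right]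
      apply Finset.sum_congr rfl
      intro q hq
      simp [Nat.succ_sub_succ]
    rw [h3]
    -- first sum: extend to range (n+2)
    have h4 : ∑ q ∈ Finset.range (n + 1),
        ((n + 1).choose (q + 1)) • (T ^ (n + 1 - q) * c q) =
        ∑ q ∈ Finset.range (n + 2),
          ((n + 1).choose (q + 1)) • (T ^ (n + 1 - q) * c q) := by
      rw [Finset.sum_range_succ
        (fun q => ((n + 1).choose (q + 1)) • (T ^ (n + 1 - q) * c q)) (n + 1)]
      simp
    rw [h4]
    have h5 : ∑ q ∈ Finset.range (n + 2),
        ((n + 2).choose (q + 1)) • (T ^ (n + 1 - q) * c q) =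
        (∑ q ∈ Finset.range (n + 2), ((n + 1).choose (q + 1)) • (T ^ (n + 1 - q) * c q)) +
        ∑ q ∈ Finset.range (n + 2), ((n + 1).choose q) • (T ^ (n + 1 - q) * c q) := by
      rw [← Finset.sum_add_distrib]
      apply Finset.sum_congr rfl
      intro q _
      rw [← add_smul]
      congr 1
      rw [Nat.choose_succ_succ (n + 1) q, Nat.add_comm]
    rw [h5]
    abel

end Aux

/-- Key identity in the proof of Lemma 3.2 of Cao–Zhou, ungraded form: for a
Lie derivation `d` of `L`, `A ∈ L` and `n ≥ 1`,
`d ∘ (ad_A)ⁿ = (ad_A)ⁿ ∘ d + Σ_{q=0}^{n-1} (n choose (n-1-q)) • (ad_A)^{n-1-q} ∘ ad_{((-ad_A)^q)(d A)}`. -/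
theorem stmt8 {R : Type*} [CommRing R] {L : Type*} [LieRing L] [LieAlgebra R L]
    (d : L →ₗ[R] L) (hd : ∀ x y : L, d ⁅x, y⁆ = ⁅d x, y⁆ + ⁅x, d y⁆)
    (A : L) (n : ℕ) (hn : 1 ≤ n) :
    d * (LieAlgebra.ad R L A) ^ n =
      (LieAlgebra.ad R L A) ^ n * d +
        ∑ q ∈ Finset.range n,
          (n.choose (n - 1 - q)) •
            ((LieAlgebra.ad R L A) ^ (n - 1 - q) *
              LieAlgebra.ad R L (((-(LieAlgebra.ad R L A)) ^ q) (d A))) := by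
  obtain ⟨m, rfl⟩ := Nat.exists_eq_succ_of_ne_zero (by omega : n ≠ 0)
  rw [aux_key d hd A m]
  congr 1
  apply Finset.sum_congr rfl
  intro q hq
  rw [Finset.mem_range] at hq
  have h1 : m + 1 - 1 - q = m - q := by omega
  have h2 : (m + 1).choose (m - q) = (m + 1).choose (q + 1) := by
    rw [← Nat.choose_symm (by omega : q + 1 ≤ m + 1)]
    congr 1
    omega
  rw [h1, h2]
end

section
/- Let R be a commutative ring that is also a ℚ-algebra, L a Lie algebra over R, and d : L → L an R-linear Lie derivation. Let A ∈ L be such that ad_A is nilpotent, and let exp(ad_A) = Σ_{n≥0} (1/n!)(ad_A)^n (a finite sum). Then exp(ad_A) ∘ d ∘ exp(−ad_A) = d − Σ_{q≥0} (1/(q+1)!) · ad_{((ad_A)^{q})(d A)} as linear endomorphisms of L (the sum on the right being finite by nilpotency of ad_A); equivalently, exp(ad_A) ∘ d ∘ exp(−ad_A) = d + ad_{N(dA)} where N is the endomorphism (1 − exp(ad_A))/ad_A = −Σ_{q≥0} (1/(q+1)!)(ad_A)^q. -/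
open Finset

section Aux

variable (R : Type*) [CommRing R] [Algebra ℚ R]
variable {A : Type*} [Ring A] [Algebra R A]

/-- The operator `x ↦ a * x - x * a` on an `R`-algebra `A`. -/
private def myT (a : A) : Module.End R A :=
  LinearMap.mulLeft R a - LinearMap.mulRight R a

omit [Algebra ℚ R] in
private lemma myT_pow_succ (a d : A) (k : ℕ) :
    (myT R a ^ (k+1)) d = a * ((myT R a ^ k) d) - ((myT R a ^ k) d) * a := by
  rw [pow_succ', Module.End.mul_apply]
  simp [myT, LinearMap.sub_apply, LinearMap.mulLeft_apply, LinearMap.mulRight_apply]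

private lemma myT_pow_eq_sum (a d : A) (k : ℕ) :
    (myT R a ^ k) d = ∑ i ∈ Finset.range (k+1),
      algebraMap ℚ R ((-1:ℚ)^(k-i) * (k.choose i)) • (a^i * d * a^(k-i)) := by
  have hc : Commute (LinearMap.mulLeft R a) (-(LinearMap.mulRight R a)) :=
    (LinearMap.commute_mulLeft_right (R := R) a a).neg_right
  have hT : myT R a ^ k = ∑ i ∈ Finset.range (k+1),
      (LinearMap.mulLeft R a)^i * (-(LinearMap.mulRight R a))^(k-i) *
        ((k.choose i : ℕ) : Module.End R A) := by
    rw [myT, sub_eq_add_neg]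
    exact hc.add_pow k
  rw [hT, LinearMap.sum_apply]
  refine Finset.sum_congr rfl fun i _ => ?_
  rcases Nat.even_or_odd (k - i) with hp | hp
  · rw [hp.neg_pow (LinearMap.mulRight R a), hp.neg_one_pow, one_mul, LinearMap.pow_mulLeft, LinearMap.pow_mulRight,
      map_natCast (algebraMap ℚ R), Nat.cast_smul_eq_nsmul, Module.End.mul_apply,
      Module.End.mul_apply, Module.End.natCast_apply, map_nsmul, map_nsmul,
      LinearMap.mulRight_apply, LinearMap.mulLeft_apply, mul_assoc]
  · rw [hp.neg_pow (LinearMap.mulRight R a), hp.neg_one_pow, LinearMap.pow_mulLeft, LinearMap.pow_mulRight]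
    rw [show (-(1:ℚ)) * (k.choose i : ℚ) = -((k.choose i : ℕ) : ℚ) by ring]
    rw [map_neg, map_natCast (algebraMap ℚ R), neg_smul, Nat.cast_smul_eq_nsmul,
      mul_neg, neg_mul, LinearMap.neg_apply, Module.End.mul_apply, Module.End.mul_apply,
      Module.End.natCast_apply, map_nsmul, map_nsmul, LinearMap.mulRight_apply,
      LinearMap.mulLeft_apply, mul_assoc]

omit [Algebra ℚ R] in
private lemma myT_pow_D (a d : A) (D : ℕ → A)
    (h1 : d * a = a * d + D 0)
    (h2 : ∀ q, a * D q = D q * a + D (q+1)) :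
    ∀ k, (myT R a ^ (k+1)) d = -(D k) := by
  intro k
  induction k with
  | zero =>
      rw [myT_pow_succ, pow_zero, Module.End.one_apply, h1]
      abel
  | succ k ih =>
      rw [myT_pow_succ, ih, mul_neg, neg_mul, h2 k]
      abel

private lemma key (a d : A) (D : ℕ → A) (N : ℕ)
    (h1 : d * a = a * d + D 0)
    (h2 : ∀ q, a * D q = D q * a + D (q+1))
    (h3 : ∀ q, N ≤ q → D q = 0)
    (hN : a ^ N = 0) :
    (∑ n ∈ Finset.range N, algebraMap ℚ R (1 / (n.factorial : ℚ)) • a ^ n) * d *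
      (∑ n ∈ Finset.range N, algebraMap ℚ R (1 / (n.factorial : ℚ)) • (-a) ^ n) =
    d - ∑ q ∈ Finset.range N, algebraMap ℚ R (1 / ((q + 1).factorial : ℚ)) • D q := by
  rcases Nat.eq_zero_or_pos N with h0 | hNpos
  · subst h0
    have hone : (1 : A) = 0 := by simpa using hN
    have hd0 : d = 0 := by rw [← mul_one d, hone, mul_zero]
    simp [hd0]
  have hpow : ∀ m, N ≤ m → a ^ m = 0 := by
    intro m hm
    calc a ^ m = a ^ N * a ^ (m - N) := by rw [← pow_add, Nat.add_sub_cancel' hm]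
    _ = 0 := by rw [hN, zero_mul]
  have hneg : ∀ n : ℕ, (-a) ^ n = algebraMap ℚ R ((-1:ℚ)^n) • a ^ n := by
    intro n
    rcases Nat.even_or_odd n with he | ho
    · rw [he.neg_pow, he.neg_one_pow, map_one, one_smul]
    · rw [ho.neg_pow, ho.neg_one_pow, map_neg, map_one, neg_smul, one_smul]
  set f : ℕ × ℕ → A := fun p =>
    algebraMap ℚ R ((-1:ℚ)^p.2 / (p.1.factorial * p.2.factorial)) • (a^p.1 * d * a^p.2)
    with hf
  have expand :
      (∑ n ∈ Finset.range N, algebraMap ℚ R (1 / (n.factorial : ℚ)) • a ^ n) * d *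
        (∑ n ∈ Finset.range N, algebraMap ℚ R (1 / (n.factorial : ℚ)) • (-a) ^ n)
      = ∑ p ∈ Finset.range N ×ˢ Finset.range N, f p := by
    rw [Finset.sum_mul, Finset.sum_mul_sum, Finset.sum_product]
    refine Finset.sum_congr rfl fun m _ => Finset.sum_congr rfl fun n _ => ?_
    rw [hneg n, smul_mul_assoc, smul_mul_assoc, mul_smul_comm, mul_smul_comm,
      smul_smul, smul_smul, ← map_mul, ← map_mul]
    simp only [hf]
    congr 1
    have hm : (m.factorial : ℚ) ≠ 0 := Nat.cast_ne_zero.2 m.factorial_ne_zero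
    have hn : (n.factorial : ℚ) ≠ 0 := Nat.cast_ne_zero.2 n.factorial_ne_zero
    field_simp
  rw [expand]
  have step1 : ∑ p ∈ Finset.range N ×ˢ Finset.range N, f p
      = ∑ p ∈ Finset.range (2*N+1) ×ˢ Finset.range (2*N+1), f p := by
    apply Finset.sum_subset
      (Finset.product_subset_product (Finset.range_subset_range.2 (by omega))
        (Finset.range_subset_range.2 (by omega)))
    intro p hp hnp
    have hcase : N ≤ p.1 ∨ N ≤ p.2 := by
      simp only [Finset.mem_product, Finset.mem_range] at hp hnp
      omega
    rcases hcase with h | h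
    · simp [hf, hpow _ h]
    · simp [hf, hpow _ h]
  have step2 : ∑ p ∈ Finset.range (2*N+1) ×ˢ Finset.range (2*N+1), f p
      = ∑ p ∈ (Finset.range (2*N+1) ×ˢ Finset.range (2*N+1)).filter
          (fun p => p.1 + p.2 < 2*N+1), f p := by
    symm
    apply Finset.sum_subset (Finset.filter_subset _ _)
    intro p hp hnp
    have hcase : N ≤ p.1 ∨ N ≤ p.2 := by
      simp only [Finset.mem_filter, Finset.mem_product, Finset.mem_range] at hp hnp
      omega
    rcases hcase with h | h
    · simp [hf, hpow _ h]
    · simp [hf, hpow _ h]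
  have step3 : (Finset.range (2*N+1) ×ˢ Finset.range (2*N+1)).filter
        (fun p => p.1 + p.2 < 2*N+1)
      = (Finset.range (2*N+1)).biUnion (fun k => Finset.HasAntidiagonal.antidiagonal k) := by
    ext ⟨m, n⟩
    simp only [Finset.mem_filter, Finset.mem_product, Finset.mem_range, Finset.mem_biUnion,
      Finset.HasAntidiagonal.mem_antidiagonal]
    constructor
    · rintro ⟨⟨hm, hn⟩, hmn⟩
      exact ⟨m + n, hmn, rfl⟩
    · rintro ⟨k, hk, hmn⟩
      omega
  have hdisj : (↑(Finset.range (2*N+1)) : Set ℕ).PairwiseDisjoint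
      (fun k => Finset.HasAntidiagonal.antidiagonal k) := by
    intro x _ y _ hxy
    refine Finset.disjoint_left.mpr fun p hpx hpy => hxy ?_
    rw [Finset.HasAntidiagonal.mem_antidiagonal] at hpx hpy
    rw [← hpx, ← hpy]
  have step4 : ∑ p ∈ (Finset.range (2*N+1)).biUnion (fun k => Finset.HasAntidiagonal.antidiagonal k), f p
      = ∑ k ∈ Finset.range (2*N+1), ∑ p ∈ Finset.HasAntidiagonal.antidiagonal k, f p :=
    Finset.sum_biUnion hdisj
  have step5 : ∀ k, ∑ p ∈ Finset.HasAntidiagonal.antidiagonal k, f p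
      = algebraMap ℚ R (1 / (k.factorial : ℚ)) • (myT R a ^ k) d := by
    intro k
    rw [Finset.Nat.sum_antidiagonal_eq_sum_range_succ_mk, myT_pow_eq_sum, Finset.smul_sum]
    refine Finset.sum_congr rfl fun i hi => ?_
    rw [smul_smul, ← map_mul]
    simp only [hf]
    congr 1
    have hik : i ≤ k := by rw [Finset.mem_range] at hi; omega
    rw [Nat.cast_choose ℚ hik]
    have hq1 : (i.factorial : ℚ) ≠ 0 := Nat.cast_ne_zero.2 i.factorial_ne_zero
    have hq2 : ((k - i).factorial : ℚ) ≠ 0 := Nat.cast_ne_zero.2 (k - i).factorial_ne_zero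
    have hq3 : (k.factorial : ℚ) ≠ 0 := Nat.cast_ne_zero.2 k.factorial_ne_zero
    field_simp
  rw [step1, step2, step3, step4]
  rw [Finset.sum_congr rfl fun k _ => step5 k]
  rw [Finset.sum_range_succ']
  have hP : ∀ k, (myT R a ^ (k+1)) d = -(D k) := myT_pow_D R a d D h1 h2
  have hzero : algebraMap ℚ R (1 / ((0:ℕ).factorial : ℚ)) • (myT R a ^ 0) d = d := by
    rw [pow_zero, Module.End.one_apply]
    simp
  rw [hzero]
  have hterm : ∀ j, algebraMap ℚ R (1 / ((j+1).factorial : ℚ)) • (myT R a ^ (j+1)) d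
      = -(algebraMap ℚ R (1 / ((j+1).factorial : ℚ)) • D j) := by
    intro j
    rw [hP j, smul_neg]
  rw [Finset.sum_congr rfl fun j _ => hterm j, Finset.sum_neg_distrib]
  have hcut : ∑ j ∈ Finset.range (2*N), algebraMap ℚ R (1 / ((j+1).factorial : ℚ)) • D j
      = ∑ j ∈ Finset.range N, algebraMap ℚ R (1 / ((j+1).factorial : ℚ)) • D j := by
    symm
    apply Finset.sum_subset (Finset.range_subset_range.2 (by omega))
    intro q _ hq
    rw [Finset.mem_range] at hq
    rw [h3 q (by omega), smul_zero]
  rw [hcut]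
  abel

end Aux

/-- Lemma 3.2 of Cao–Zhou, ungraded form: for a Lie derivation `d` of `L` and
`A ∈ L` with `(ad_A)^N = 0`, letting `E = exp(ad_A)` and `Eneg = exp(-ad_A)`
(finite sums), one has
`E ∘ d ∘ Eneg = d - Σ_{q} (1/(q+1)!) • ad_{((ad_A)^q)(d A)}`. -/
theorem stmt9 {R : Type*} [CommRing R] [Algebra ℚ R]
    {L : Type*} [LieRing L] [LieAlgebra R L]
    (d : L →ₗ[R] L) (hd : ∀ x y : L, d ⁅x, y⁆ = ⁅d x, y⁆ + ⁅x, d y⁆)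
    (A : L) (N : ℕ) (hN : (LieAlgebra.ad R L A) ^ N = 0)
    (E Eneg : Module.End R L)
    (hE : E = ∑ n ∈ Finset.range N,
        algebraMap ℚ R (1 / (n.factorial : ℚ)) • (LieAlgebra.ad R L A) ^ n)
    (hEneg : Eneg = ∑ n ∈ Finset.range N,
        algebraMap ℚ R (1 / (n.factorial : ℚ)) • (-(LieAlgebra.ad R L A)) ^ n) :
    E * d * Eneg =
      d - ∑ q ∈ Finset.range N,
        algebraMap ℚ R (1 / ((q + 1).factorial : ℚ)) •
          LieAlgebra.ad R L (((LieAlgebra.ad R L A) ^ q) (d A)) := by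
  subst hE hEneg
  set a : Module.End R L := LieAlgebra.ad R L A with ha
  set D : ℕ → Module.End R L := fun q => LieAlgebra.ad R L ((a ^ q) (d A)) with hD
  have h1 : (d : Module.End R L) * a = a * d + D 0 := by
    apply LinearMap.ext
    intro y
    simp only [Module.End.mul_apply, LinearMap.add_apply, ha, hD, pow_zero,
      Module.End.one_apply, LieAlgebra.ad_apply]
    rw [hd A y]
    abel
  have h2 : ∀ q, a * D q = D q * a + D (q+1) := by
    intro q
    apply LinearMap.ext
    intro y
    simp only [Module.End.mul_apply, LinearMap.add_apply, ha, hD, LieAlgebra.ad_apply]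
    have hq : (a ^ (q+1)) (d A) = ⁅A, (a ^ q) (d A)⁆ := by
      rw [pow_succ', Module.End.mul_apply, ha, LieAlgebra.ad_apply]
    rw [hq, leibniz_lie]
    abel
  have h3 : ∀ q, N ≤ q → D q = 0 := by
    intro q hq
    have hz : (a ^ q) (d A) = 0 := by
      rw [show q = N + (q - N) by omega, pow_add, Module.End.mul_apply, hN,
        LinearMap.zero_apply]
    rw [hD]
    simp only [hz]
    exact map_zero _
  exact key R a d D N h1 h2 h3 hN
end

section
/- Let R be a commutative ring that is also a ℚ-algebra, L a Lie algebra over R, and δ : L → L an R-linear Lie derivation. Let A ∈ L be such that ad_A is nilpotent, and for ω ∈ L set δ_ω = δ + ad_ω. Then exp(ad_A) ∘ δ_ω ∘ exp(−ad_A) = δ_{ω'}, where ω' = exp(ad_A)(ω) − Σ_{q≥0} (1/(q+1)!) ((ad_A)^{q})(δ A) (a finite sum); that is, conjugating the deformed operator δ + ad_ω by exp(ad_A) yields δ + ad applied to the gauge transform e^{A}·ω = e^{ad_A} ω + ((1 − e^{ad_A})/ad_A)(δ A). -/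
open Finset

lemma leibniz_pow_mul {S : Type*} [Ring S] (a : S) (D : ℕ → S)
    (hD : ∀ k, a * D k = D (k + 1) + D k * a) (n : ℕ) :
    a ^ n * D 0 = ∑ k ∈ Finset.range (n + 1), (n.choose k) • (D k * a ^ (n - k)) := by
  set lft := LinearMap.mulLeft ℕ a with hlft
  set rgt := LinearMap.mulRight ℕ a with hrgt
  set d := lft - rgt with hd
  have hcomm : Commute d rgt :=
    ((LinearMap.commute_mulLeft_right a a).sub_left (Commute.refl rgt))
  have hd1 : ∀ k, d (D k) = D (k + 1) := by
    intro k
    show lft (D k) - rgt (D k) = D (k + 1)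
    rw [hlft, hrgt]
    simp only [LinearMap.mulLeft_apply, LinearMap.mulRight_apply]
    rw [hD k, add_sub_cancel_right]
  have hdk : ∀ k, (d ^ k) (D 0) = D k := by
    intro k
    induction k with
    | zero => simp
    | succ k ih => rw [pow_succ', Module.End.mul_apply, ih, hd1]
  have key : lft = d + rgt := by rw [hd, sub_add_cancel]
  calc a ^ n * D 0 = (lft ^ n) (D 0) := by
        rw [hlft, LinearMap.pow_mulLeft, LinearMap.mulLeft_apply]
    _ = ((d + rgt) ^ n) (D 0) := by rw [← key]
    _ = (∑ k ∈ Finset.range (n + 1),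
          d ^ k * rgt ^ (n - k) * (n.choose k : Module.End ℕ S)) (D 0) := by
        rw [hcomm.add_pow]
    _ = _ := by
        rw [LinearMap.sum_apply]
        refine Finset.sum_congr rfl fun k hk => ?_
        rw [(hcomm.pow_pow k (n - k)).eq, Module.End.mul_apply, Module.End.mul_apply]
        have h1 : ((n.choose k : Module.End ℕ S)) (D 0) = (n.choose k) • D 0 := by
          simp [Module.End.natCast_apply]
        rw [h1, map_nsmul, map_nsmul, hdk]
        congr 1
        rw [hrgt, LinearMap.pow_mulRight, LinearMap.mulRight_apply]

lemma sum_square_eq_diag {M : Type*} [AddCommMonoid M] (Mn : ℕ) (f : ℕ → ℕ → M)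
    (hf : ∀ k m, Mn ≤ k + m → f k m = 0) :
    ∑ n ∈ range Mn, ∑ k ∈ range (n + 1), f k (n - k)
      = ∑ k ∈ range Mn, ∑ m ∈ range Mn, f k m := by
  rw [Finset.sum_range_diag_flip]
  refine Finset.sum_congr rfl fun k hk => ?_
  refine Finset.sum_subset ?_ ?_
  · intro x hx; rw [mem_range] at *; omega
  · intro x hx hnx; apply hf; rw [mem_range] at *; omega

lemma qsum (n : ℕ) :
    ∑ k ∈ Finset.range (n + 1),
        ((-1 : ℚ) ^ (n - k) * ((1 / (k.factorial : ℚ)) * (1 / ((n - k).factorial : ℚ))))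
      = if n = 0 then 1 else 0 := by
  have h : ∀ k ∈ Finset.range (n + 1),
      (-1 : ℚ) ^ (n - k) * ((1 / (k.factorial : ℚ)) * (1 / ((n - k).factorial : ℚ)))
        = (1 / (n.factorial : ℚ)) * ((-1) ^ (n - k) * (n.choose k)) := by
    intro k hk
    rw [Finset.mem_range, Nat.lt_succ_iff] at hk
    rw [Nat.cast_choose ℚ hk]
    have h1 : (k.factorial : ℚ) ≠ 0 := Nat.cast_ne_zero.mpr k.factorial_ne_zero
    have h2 : ((n - k).factorial : ℚ) ≠ 0 := Nat.cast_ne_zero.mpr (n - k).factorial_ne_zero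
    have h3 : (n.factorial : ℚ) ≠ 0 := Nat.cast_ne_zero.mpr n.factorial_ne_zero
    field_simp
  rw [Finset.sum_congr rfl h, ← Finset.mul_sum]
  have h2 : ∑ k ∈ Finset.range (n + 1), ((-1 : ℚ)) ^ (n - k) * (n.choose k)
      = if n = 0 then 1 else 0 := by
    have h0 := Int.alternating_sum_range_choose (n := n)
    have h0' : ∑ i ∈ Finset.range (n + 1), ((-1 : ℚ)) ^ i * (n.choose i)
        = if n = 0 then 1 else 0 := by exact_mod_cast h0
    rw [← Finset.sum_range_reflect] at h0'
    rw [← h0']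
    refine Finset.sum_congr rfl fun k hk => ?_
    rw [Finset.mem_range, Nat.lt_succ_iff] at hk
    have : n + 1 - 1 - k = n - k := by omega
    rw [this, Nat.choose_symm hk]
  rw [h2]
  split <;> simp_all
open Finset

noncomputable def cc (R : Type*) [CommRing R] [Algebra ℚ R] (n : ℕ) : R :=
  algebraMap ℚ R (1 / (n.factorial : ℚ))

lemma cc_mul_choose {R : Type*} [CommRing R] [Algebra ℚ R] {k n : ℕ} (h : k ≤ n) :
    cc R k * cc R (n - k) = cc R n * (n.choose k : R) := by
  unfold cc
  rw [← map_natCast (algebraMap ℚ R) (n.choose k), ← map_mul, ← map_mul]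
  congr 1
  rw [Nat.cast_choose ℚ h]
  have h1 : (k.factorial : ℚ) ≠ 0 := Nat.cast_ne_zero.mpr k.factorial_ne_zero
  have h2 : ((n - k).factorial : ℚ) ≠ 0 := Nat.cast_ne_zero.mpr (n - k).factorial_ne_zero
  have h3 : (n.factorial : ℚ) ≠ 0 := Nat.cast_ne_zero.mpr n.factorial_ne_zero
  field_simp

lemma master {R : Type*} [CommRing R] [Algebra ℚ R] {S : Type*} [Ring S] [Algebra R S]
    (a : S) (N : ℕ) (D : ℕ → S)
    (hD : ∀ k, a * D k = D (k + 1) + D k * a)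
    (hvan : ∀ k m, 2 * N ≤ k + m → D k * a ^ m = 0) :
    (∑ n ∈ range (2 * N), cc R n • a ^ n) * D 0
      = (∑ k ∈ range (2 * N), cc R k • D k) * (∑ m ∈ range (2 * N), cc R m • a ^ m) := by
  calc (∑ n ∈ range (2 * N), cc R n • a ^ n) * D 0
      = ∑ n ∈ range (2 * N), cc R n • (a ^ n * D 0) := by
        rw [Finset.sum_mul]
        exact Finset.sum_congr rfl fun n _ => smul_mul_assoc _ _ _
    _ = ∑ n ∈ range (2 * N), ∑ k ∈ range (n + 1),
          (cc R k * cc R (n - k)) • (D k * a ^ (n - k)) := by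
        refine Finset.sum_congr rfl fun n _ => ?_
        rw [leibniz_pow_mul a D hD n, Finset.smul_sum]
        refine Finset.sum_congr rfl fun k hk => ?_
        rw [Finset.mem_range, Nat.lt_succ_iff] at hk
        rw [← Nat.cast_smul_eq_nsmul R, smul_smul, cc_mul_choose hk, mul_comm]
    _ = ∑ k ∈ range (2 * N), ∑ m ∈ range (2 * N),
          (cc R k * cc R m) • (D k * a ^ m) := by
        exact sum_square_eq_diag (2 * N) (fun k m => (cc R k * cc R m) • (D k * a ^ m))
          (fun k m h => by rw [hvan k m h, smul_zero])
    _ = _ := by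
        rw [Finset.sum_mul_sum]
        refine Finset.sum_congr rfl fun k _ => Finset.sum_congr rfl fun m _ => ?_
        rw [smul_mul_assoc, mul_smul_comm, smul_smul]

/-- Gauge-transformation formula of Section 3 of Cao–Zhou, ungraded form: for a
Lie derivation `δ` of `L`, `ω ∈ L`, and `A ∈ L` with `(ad_A)^N = 0`, letting
`E = exp(ad_A)` and `Eneg = exp(-ad_A)` (finite sums), conjugating the deformed
operator `δ + ad_ω` by `exp(ad_A)` gives `δ + ad_{ω'}` with
`ω' = E ω - Σ_q (1/(q+1)!) • ((ad_A)^q)(δ A)`, the gauge transform `e^A · ω`. -/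
theorem stmt10 {R : Type*} [CommRing R] [Algebra ℚ R]
    {L : Type*} [LieRing L] [LieAlgebra R L]
    (δ' : L →ₗ[R] L) (hδ' : ∀ x y : L, δ' ⁅x, y⁆ = ⁅δ' x, y⁆ + ⁅x, δ' y⁆)
    (A ω : L) (N : ℕ) (hN : (LieAlgebra.ad R L A) ^ N = 0)
    (E Eneg : Module.End R L)
    (hE : E = ∑ n ∈ Finset.range N,
        algebraMap ℚ R (1 / (n.factorial : ℚ)) • (LieAlgebra.ad R L A) ^ n)
    (hEneg : Eneg = ∑ n ∈ Finset.range N,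
        algebraMap ℚ R (1 / (n.factorial : ℚ)) • (-(LieAlgebra.ad R L A)) ^ n) :
    E * (δ' + LieAlgebra.ad R L ω) * Eneg =
      δ' + LieAlgebra.ad R L
        (E ω - ∑ q ∈ Finset.range N,
          algebraMap ℚ R (1 / ((q + 1).factorial : ℚ)) •
            ((LieAlgebra.ad R L A) ^ q) (δ' A)) := by
  rcases Nat.eq_zero_or_pos N with rfl | hNpos
  · have h10 : (0 : Module.End R L) = 1 := by simpa using hN.symm
    haveI := subsingleton_of_zero_eq_one h10
    exact Subsingleton.elim _ _
  set ad' := LieAlgebra.ad R L with had'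
  set a : Module.End R L := ad' A with ha
  -- basic facts
  have hapow : ∀ n, N ≤ n → a ^ n = 0 := fun n hn => pow_eq_zero_of_le hn hN
  have hEc : E = ∑ n ∈ Finset.range N, cc R n • a ^ n := hE
  have hEnegc : Eneg = ∑ n ∈ Finset.range N, cc R n • (-a) ^ n := hEneg
  have E_eq : ∀ M, N ≤ M → E = ∑ n ∈ Finset.range M, cc R n • a ^ n := by
    intro M hM
    rw [hEc]
    refine Finset.sum_subset (Finset.range_subset_range.2 hM) fun x hx hxn => ?_
    rw [hapow x (by rw [Finset.mem_range, not_lt] at hxn; exact hxn), smul_zero]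
  letI : LieRing (Module.End R L) := LieRing.ofAssociativeRing
  have hadlie : ∀ x y : L, ad' ⁅x, y⁆ = ad' x * ad' y - ad' y * ad' x := by
    intro x y
    rw [LieHom.map_lie, Ring.lie_def]
  have hadδ : a * δ' = -(ad' (δ' A)) + δ' * a := by
    ext x
    simp only [Module.End.mul_apply, LinearMap.add_apply, LinearMap.neg_apply, had',
      LieAlgebra.ad_apply, ha]
    rw [hδ' A x]
    abel
  -- the two derivative families
  set Dω : ℕ → Module.End R L := fun k => ad' ((a ^ k) ω) with hDω
  set Dδ : ℕ → Module.End R L := fun k => Nat.rec (δ' : Module.End R L)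
      (fun q _ => -(ad' ((a ^ q) (δ' A)))) k with hDδ
  have hDδ0 : Dδ 0 = δ' := rfl
  have hDδs : ∀ q, Dδ (q + 1) = -(ad' ((a ^ q) (δ' A))) := fun q => rfl
  have hstep : ∀ x : L, (fun y => a * ad' y = ad' ((a : Module.End R L) x) + ad' y * a) ⁅A, x⁆ →
      True := fun _ _ => trivial
  have hpow_apply : ∀ (k : ℕ) (x : L), (a ^ (k + 1)) x = ⁅A, (a ^ k) x⁆ := by
    intro k x
    rw [pow_succ']
    simp [ha, had', Module.End.mul_apply, LieAlgebra.ad_apply]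
  have hrecω : ∀ k, a * Dω k = Dω (k + 1) + Dω k * a := by
    intro k
    rw [hDω]
    simp only []
    rw [hpow_apply k ω, hadlie A ((a ^ k) ω), ← ha]
    noncomm_ring
  have hrecδ : ∀ k, a * Dδ k = Dδ (k + 1) + Dδ k * a := by
    intro k
    cases k with
    | zero => rw [hDδ0, hDδs 0, hadδ]; simp
    | succ q =>
      rw [hDδs q, hDδs (q + 1)]
      rw [hpow_apply q (δ' A), hadlie A ((a ^ q) (δ' A)), ← ha]
      noncomm_ring
  have had0 : ad' (0 : L) = 0 := map_zero _
  have adl_sum : ∀ (s : Finset ℕ) (f : ℕ → L), ad' (∑ i ∈ s, f i) = ∑ i ∈ s, ad' (f i) := by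
    intro s f
    rw [← LieHom.coe_toLinearMap, map_sum]
  have adl_smul : ∀ (r : R) (x : L), ad' (r • x) = r • ad' x := by
    intro r x
    rw [← LieHom.coe_toLinearMap, map_smul]
  have adl_sub : ∀ (x y : L), ad' (x - y) = ad' x - ad' y := by
    intro x y
    rw [← LieHom.coe_toLinearMap, map_sub]
  have hvanω : ∀ k m, 2 * N ≤ k + m → Dω k * a ^ m = 0 := by
    intro k m h
    rcases le_or_gt N m with hm | hm
    · rw [hapow m hm, mul_zero]
    · have hk : N ≤ k := by omega
      rw [hDω]
      simp only []
      rw [hapow k hk]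
      simp [had0]
  have hvanδ : ∀ k m, 2 * N ≤ k + m → Dδ k * a ^ m = 0 := by
    intro k m h
    rcases le_or_gt N m with hm | hm
    · rw [hapow m hm, mul_zero]
    · obtain ⟨j, rfl⟩ : ∃ j, k = j + 1 := ⟨k - 1, by omega⟩
      have hj : N ≤ j := by omega
      rw [hDδs j, hapow j hj]
      simp [had0]
  -- conjugation identity for ad ω
  have h1 : E * ad' ω = ad' (E ω) * E := by
    have hm := master (R := R) a N Dω hrecω hvanω
    have hD0 : Dω 0 = ad' ω := by rw [hDω]; simp
    have hsum : ad' (E ω) = ∑ k ∈ Finset.range (2 * N), cc R k • Dω k := by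
      rw [E_eq (2 * N) (by omega), LinearMap.sum_apply, adl_sum]
      refine Finset.sum_congr rfl fun k _ => ?_
      rw [LinearMap.smul_apply, adl_smul]
    calc E * ad' ω
        = (∑ n ∈ Finset.range (2 * N), cc R n • a ^ n) * Dω 0 := by
          rw [E_eq (2 * N) (by omega), hD0]
      _ = (∑ k ∈ Finset.range (2 * N), cc R k • Dω k)
            * (∑ m ∈ Finset.range (2 * N), cc R m • a ^ m) := hm
      _ = ad' (E ω) * E := by rw [← E_eq (2 * N) (by omega), ← hsum]
  -- conjugation identity for δ'
  set Sc : L := ∑ q ∈ Finset.range N, cc R (q + 1) • (a ^ q) (δ' A) with hSc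
  have h2 : E * (δ' : Module.End R L) = ((δ' : Module.End R L) - ad' Sc) * E := by
    have hm := master (R := R) a N Dδ hrecδ hvanδ
    have hsum : (∑ k ∈ Finset.range (2 * N), cc R k • Dδ k)
        = (δ' : Module.End R L) - ad' Sc := by
      have h2N : 2 * N = (2 * N - 1) + 1 := by omega
      rw [h2N, Finset.sum_range_succ']
      have hc0 : cc R 0 • Dδ 0 = (δ' : Module.End R L) := by
        rw [hDδ0]
        simp [cc]
      rw [hc0]
      have hSc2 : Sc = ∑ q ∈ Finset.range (2 * N - 1), cc R (q + 1) • (a ^ q) (δ' A) := by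
        rw [hSc]
        refine Finset.sum_subset (Finset.range_subset_range.2 (by omega)) fun x hx hxn => ?_
        rw [Finset.mem_range, not_lt] at hxn
        rw [hapow x hxn]
        simp
      have : ∑ i ∈ Finset.range (2 * N - 1), cc R (i + 1) • Dδ (i + 1) = -(ad' Sc) := by
        rw [hSc2, adl_sum, ← Finset.sum_neg_distrib]
        refine Finset.sum_congr rfl fun q _ => ?_
        rw [hDδs q, adl_smul]
        rw [smul_neg]
      rw [this]
      abel
    calc E * (δ' : Module.End R L)
        = (∑ n ∈ Finset.range (2 * N), cc R n • a ^ n) * Dδ 0 := by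
          rw [E_eq (2 * N) (by omega), hDδ0]
      _ = (∑ k ∈ Finset.range (2 * N), cc R k • Dδ k)
            * (∑ m ∈ Finset.range (2 * N), cc R m • a ^ m) := hm
      _ = ((δ' : Module.End R L) - ad' Sc) * E := by
          rw [← E_eq (2 * N) (by omega), hsum]
  -- E * Eneg = 1
  have h3 : E * Eneg = 1 := by
    rw [hEc, hEnegc, Finset.sum_mul_sum]
    have hterm : ∀ k m : ℕ, (cc R k • a ^ k) * (cc R m • (-a) ^ m)
        = (algebraMap ℚ R ((-1 : ℚ) ^ m * ((1 / (k.factorial : ℚ)) * (1 / (m.factorial : ℚ)))))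
            • a ^ (k + m) := by
      intro k m
      rw [smul_mul_assoc, mul_smul_comm, smul_smul]
      rw [← neg_one_smul R a, smul_pow, mul_smul_comm, smul_smul]
      rw [← pow_add]
      congr 1
      rw [cc, cc]
      rw [map_mul, map_mul, map_pow]
      simp only [map_neg, map_one]
      ring
    rw [Finset.sum_congr rfl fun k _ => Finset.sum_congr rfl fun m _ => hterm k m]
    rw [← sum_square_eq_diag N
      (fun k m => (algebraMap ℚ R ((-1 : ℚ) ^ m * ((1 / (k.factorial : ℚ)) * (1 / (m.factorial : ℚ))))) • a ^ (k + m))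
      (fun k m h => by rw [hapow (k + m) h, smul_zero])]
    have hinner : ∀ n ∈ Finset.range N,
        (∑ k ∈ Finset.range (n + 1),
          (algebraMap ℚ R ((-1 : ℚ) ^ (n - k) * ((1 / (k.factorial : ℚ)) * (1 / ((n - k).factorial : ℚ))))) • a ^ (k + (n - k)))
        = (algebraMap ℚ R (if n = 0 then (1:ℚ) else 0)) • a ^ n := by
      intro n _
      have : ∀ k ∈ Finset.range (n + 1),
          (algebraMap ℚ R ((-1 : ℚ) ^ (n - k) * ((1 / (k.factorial : ℚ)) * (1 / ((n - k).factorial : ℚ))))) • a ^ (k + (n - k))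
          = (algebraMap ℚ R ((-1 : ℚ) ^ (n - k) * ((1 / (k.factorial : ℚ)) * (1 / ((n - k).factorial : ℚ))))) • a ^ n := by
        intro k hk
        rw [Finset.mem_range, Nat.lt_succ_iff] at hk
        congr 2
        omega
      rw [Finset.sum_congr rfl this, ← Finset.sum_smul, ← map_sum, qsum n]
    rw [Finset.sum_congr rfl hinner]
    rw [Finset.sum_eq_single_of_mem 0 (Finset.mem_range.2 hNpos)]
    · simp
    · intro n _ hn
      rw [if_neg hn]
      simp
  -- assemble
  calc E * ((δ' : Module.End R L) + ad' ω) * Eneg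
      = (E * δ' + E * ad' ω) * Eneg := by rw [mul_add]
    _ = (((δ' : Module.End R L) - ad' Sc) * E + ad' (E ω) * E) * Eneg := by rw [h2, h1]
    _ = (((δ' : Module.End R L) + ad' (E ω - Sc)) * E) * Eneg := by
        rw [adl_sub]
        noncomm_ring
    _ = ((δ' : Module.End R L) + ad' (E ω - Sc)) * (E * Eneg) := by rw [mul_assoc]
    _ = (δ' : Module.End R L) + ad' (E ω - Sc) := by rw [h3, mul_one]
end
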